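/- Let β>0, μ>1, f ∈ E_{(β,μ)} and 0 < β' < β. Then the inverse Fourier transform F⁻¹(f)(x) = (2π)^{−1/2}∫_{−∞}^{∞} f(m) e^{ixm} dm extends to a holomorphic function on the horizontal strip H_{β'} = {z ∈ ℂ : |Im z| < β'}. -/

import Mathlib

open MeasureTheory Real Set

lemma my_integrable_exp_neg_abs {a : ℝ} (ha : 0 < a) :
    Integrable fun m : ℝ => Real.exp (-a * |m|) := by
  rw [← integrableOn_univ, ← @Iio_union_Ici _ _ (0 : ℝ), integrableOn_union,
    integrableOn_Ici_iff_integrableOn_Ioi]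
  have h : IntegrableOn (fun m : ℝ => Real.exp (-a * |m|)) (Ioi 0) := by
    refine (exp_neg_integrableOn_Ioi 0 ha).congr_fun (fun x hx => ?_) measurableSet_Ioi
    rw [abs_of_pos hx]
  refine ⟨?_, h⟩
  rw [← (Measure.measurePreserving_neg (volume : Measure ℝ)).integrableOn_comp_preimage
      (Homeomorph.neg ℝ).measurableEmbedding]
  simp only [Function.comp_def, abs_neg, neg_preimage, neg_Iio, neg_zero]
  exact h

/-- The weighted quantity `(1+|m|)^μ e^{β|m|} |f(m)|`. -/
noncomputable def Eweight (β μ : ℝ) (f : ℝ → ℂ) (m : ℝ) : ℝ :=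
  (1 + |m|) ^ μ * Real.exp (β * |m|) * ‖f m‖

/-- Membership in the space `E_{(β,μ)}`: continuous with finite weighted sup. -/
def MemE (β μ : ℝ) (f : ℝ → ℂ) : Prop :=
  Continuous f ∧ BddAbove (Set.range (Eweight β μ f))

/-- for `f ∈ E_{(β,μ)}` and `0 < β' < β`, the inverse Fourier transform
`F⁻¹(f)(x) = (2π)^{−1/2} ∫ f(m) e^{ixm} dm` extends holomorphically to the horizontal
strip `H_{β'} = {z : |Im z| < β'}`, by the formula `z ↦ (2π)^{−1/2} ∫ f(m) e^{izm} dm`. -/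
theorem inverseFourier_holomorphic_on_strip (β μ β' : ℝ) (hβ : 0 < β) (hμ : 1 < μ)
    (hβ' : 0 < β') (hβ'β : β' < β) (f : ℝ → ℂ) (hf : MemE β μ f) :
    ∃ F : ℂ → ℂ,
      DifferentiableOn ℂ F {z : ℂ | |z.im| < β'} ∧
      (∀ z ∈ {z : ℂ | |z.im| < β'},
        F z = ((2 * Real.pi) ^ (-(1 : ℝ) / 2) : ℝ) *
          ∫ m : ℝ, f m * Complex.exp (Complex.I * z * m)) ∧
      (∀ x : ℝ,
        F x = ((2 * Real.pi) ^ (-(1 : ℝ) / 2) : ℝ) *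
          ∫ m : ℝ, f m * Complex.exp (Complex.I * x * m)) := by
  obtain ⟨hfc, C, hC⟩ := hf
  rw [mem_upperBounds] at hC
  -- pointwise bound |f m| ≤ C * exp (-β * |m|)
  have hfb : ∀ m : ℝ, ‖f m‖ ≤ C * Real.exp (-β * |m|) := by
    intro m
    have h1 : Eweight β μ f m ≤ C := hC _ ⟨m, rfl⟩
    have h2 : (1 : ℝ) ≤ (1 + |m|) ^ μ := by
      apply Real.one_le_rpow (by linarith [abs_nonneg m]) (by linarith)
    have h3 : Real.exp (β * |m|) * ‖f m‖ ≤ C := by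
      calc Real.exp (β * |m|) * ‖f m‖
          ≤ (1 + |m|) ^ μ * Real.exp (β * |m|) * ‖f m‖ := by
            rw [mul_assoc]; nlinarith [Real.exp_pos (β * |m|),
              norm_nonneg (f m), mul_nonneg (Real.exp_pos (β * |m|)).le
              (norm_nonneg (f m))]
        _ ≤ C := h1
    rw [neg_mul, Real.exp_neg, mul_comm C, ← div_eq_inv_mul, le_div_iff₀ (Real.exp_pos _),
      mul_comm]
    exact h3
  have hC0 : 0 ≤ C := le_trans (norm_nonneg (f 0)) (by simpa using hfb 0)
  refine ⟨fun z => ((2 * Real.pi) ^ (-(1 : ℝ) / 2) : ℝ) *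
      ∫ m : ℝ, f m * Complex.exp (Complex.I * z * m), ?_, fun z _ => rfl, fun x => rfl⟩
  apply DifferentiableOn.const_mul
  intro z₀ hz₀
  simp only [mem_setOf_eq] at hz₀
  apply DifferentiableAt.differentiableWithinAt
  set ε : ℝ := (β - |z₀.im|) / 2 with hε
  have hεpos : 0 < ε := by dsimp [ε]; linarith
  set b : ℝ := |z₀.im| + ε with hb
  have hbβ : b < β := by dsimp [b, ε]; linarith
  -- norm estimates
  have key : ∀ z : ℂ, z ∈ Metric.ball z₀ ε → ∀ m : ℝ,
      ‖Complex.exp (Complex.I * z * m)‖ ≤ Real.exp (b * |m|) := by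
    intro z hz m
    rw [Complex.norm_exp]
    apply Real.exp_le_exp.2
    have : (Complex.I * z * m).re = -z.im * m := by
      simp [Complex.mul_re, Complex.mul_im]
    rw [this]
    have him : |z.im| ≤ b := by
      have := abs_sub_abs_le_abs_sub z.im z₀.im
      have h2 : |z.im - z₀.im| ≤ ‖z - z₀‖ := by
        simpa using Complex.abs_im_le_norm (z - z₀)
      rw [Metric.mem_ball, Complex.dist_eq] at hz
      dsimp [b]; linarith
    calc -z.im * m ≤ |(-z.im) * m| := le_abs_self _
      _ = |z.im| * |m| := by rw [abs_mul, abs_neg]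
      _ ≤ b * |m| := by apply mul_le_mul_of_nonneg_right him (abs_nonneg m)
  have hmeas : ∀ z : ℂ, AEStronglyMeasurable (fun m : ℝ => f m * Complex.exp (Complex.I * z * m)) volume := by
    intro z
    exact (hfc.mul (by continuity)).aestronglyMeasurable
  have hboundint : Integrable (fun m : ℝ => C * (|m| + 1) * Real.exp (-(β - b) * |m|)) := by
    have hc2 : 0 < (β - b) / 2 := by linarith
    apply Integrable.mono' ((my_integrable_exp_neg_abs hc2).const_mul
      (C * (2 / (β - b) + 1)))
    · exact Continuous.aestronglyMeasurable (by fun_prop)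
    · filter_upwards with m
      rw [Real.norm_eq_abs, abs_of_nonneg (by positivity)]
      have h1 : |m| ≤ 2 / (β - b) * Real.exp ((β - b) / 2 * |m|) := by
        have h0 : (β - b) / 2 * |m| ≤ Real.exp ((β - b) / 2 * |m|) := by
          linarith [Real.add_one_le_exp ((β - b) / 2 * |m|)]
        have hβb : (0:ℝ) < β - b := by linarith
        calc |m| = 2 / (β - b) * ((β - b) / 2 * |m|) := by
              field_simp
          _ ≤ 2 / (β - b) * Real.exp ((β - b) / 2 * |m|) :=
              mul_le_mul_of_nonneg_left h0 (div_pos two_pos hβb).le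
      have h2 : (1 : ℝ) ≤ Real.exp ((β - b) / 2 * |m|) :=
        Real.one_le_exp (by positivity)
      have hexp : Real.exp (-(β - b) * |m|) * Real.exp ((β - b) / 2 * |m|)
          = Real.exp (-((β - b) / 2) * |m|) := by
        rw [← Real.exp_add]; ring_nf
      calc C * (|m| + 1) * Real.exp (-(β - b) * |m|)
          ≤ C * (2 / (β - b) * Real.exp ((β - b) / 2 * |m|)
              + Real.exp ((β - b) / 2 * |m|)) * Real.exp (-(β - b) * |m|) := by
            apply mul_le_mul_of_nonneg_right _ (Real.exp_pos _).le
            apply mul_le_mul_of_nonneg_left _ hC0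
            linarith
        _ = C * (2 / (β - b) + 1) * (Real.exp (-(β - b) * |m|)
              * Real.exp ((β - b) / 2 * |m|)) := by ring
        _ = C * (2 / (β - b) + 1) * Real.exp (-((β - b) / 2) * |m|) := by rw [hexp]
  -- integrability of the integrand at z₀
  have hint : ∀ z : ℂ, z ∈ Metric.ball z₀ ε →
      Integrable (fun m : ℝ => f m * Complex.exp (Complex.I * z * m)) := by
    intro z hz
    apply Integrable.mono' (hboundint) (hmeas z)
    filter_upwards with m
    rw [norm_mul]
    calc ‖f m‖ * ‖Complex.exp (Complex.I * z * m)‖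
        ≤ (C * Real.exp (-β * |m|)) * Real.exp (b * |m|) := by
          apply mul_le_mul (hfb m) (key z hz m) (norm_nonneg _) (by positivity)
      _ = C * Real.exp (-(β - b) * |m|) := by
          rw [mul_assoc, ← Real.exp_add]; ring_nf
      _ ≤ C * (|m| + 1) * Real.exp (-(β - b) * |m|) := by
          nlinarith [mul_nonneg (mul_nonneg hC0 (abs_nonneg m))
            (Real.exp_pos (-(β - b) * |m|)).le]
  have := hasDerivAt_integral_of_dominated_loc_of_deriv_le (Metric.ball_mem_nhds z₀ hεpos)
    (F := fun (z : ℂ) (m : ℝ) => f m * Complex.exp (Complex.I * z * m))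
    (F' := fun (z : ℂ) (m : ℝ) => f m * (Complex.I * m * Complex.exp (Complex.I * z * m)))
    (bound := fun m => C * (|m| + 1) * Real.exp (-(β - b) * |m|))
    (Filter.Eventually.of_forall fun z => hmeas z)
    (hint z₀ (Metric.mem_ball_self hεpos))
    ((hfc.mul (by continuity)).aestronglyMeasurable)
    ?_ hboundint ?_
  · exact this.2.differentiableAt
  · filter_upwards with m
    intro z hz
    rw [norm_mul, norm_mul, norm_mul,
      Complex.norm_I, one_mul, Complex.norm_real, Real.norm_eq_abs]
    calc ‖f m‖ * (|m| * ‖Complex.exp (Complex.I * z * m)‖)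
        ≤ (C * Real.exp (-β * |m|)) * (|m| * Real.exp (b * |m|)) := by
          apply mul_le_mul (hfb m) _ (by positivity) (by positivity)
          exact mul_le_mul_of_nonneg_left (key z hz m) (abs_nonneg m)
      _ = C * |m| * Real.exp (-(β - b) * |m|) := by
          rw [show C * Real.exp (-β * |m|) * (|m| * Real.exp (b * |m|))
              = C * |m| * (Real.exp (-β * |m|) * Real.exp (b * |m|)) from by ring,
            ← Real.exp_add]; ring_nf
      _ ≤ C * (|m| + 1) * Real.exp (-(β - b) * |m|) := by
          nlinarith [Real.exp_pos (-(β - b) * |m|), hC0, abs_nonneg m]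
  · filter_upwards with m
    intro z hz
    have h1 : HasDerivAt (fun z : ℂ => Complex.I * z * m) (Complex.I * m) z := by
      simpa using ((hasDerivAt_id z).const_mul Complex.I).mul_const (m : ℂ)
    have h2 : HasDerivAt (fun z : ℂ => Complex.exp (Complex.I * z * m))
        (Complex.I * m * Complex.exp (Complex.I * z * m)) z := by
      simpa [mul_comm, Function.comp_def] using (Complex.hasDerivAt_exp _).comp z h1
    exact h2.const_mul (f m)
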